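/- Let γ : [0,1] → ℝ^n be an injective Lipschitz path, f : γ([0,1]) → ℝ Borel measurable and nonnegative, and A ⊂ [0,1] Lebesgue measurable. Then ∫_{γ(A)} f dH^1 = ∫_A f(γ(t)) |γ'(t)| dt. -/

import Mathlib

open MeasureTheory Set Filter Topology
open scoped ENNReal NNReal

noncomputable section

/-- Euclidean space `ℝ^n`. -/
abbrev Euc (n : ℕ) : Type := EuclideanSpace ℝ (Fin n)

/-- The hypercube `[-1,1]^n`. -/
def cube (n : ℕ) : Set (Euc n) := {x | ∀ i, |x i| ≤ 1}

lemma AF.image_null {n : ℕ} {γ : ℝ → Euc n} {K : ℝ≥0} (hγ : LipschitzWith K γ)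
    {N : Set ℝ} (hN : volume N = 0) : μH[1] (γ '' N) = 0 := by
  have h := hγ.hausdorffMeasure_image_le zero_le_one N
  have hN' : μH[1] N = 0 := by
    rw [MeasureTheory.hausdorffMeasure_real]; exact hN
  rw [hN', mul_zero] at h
  exact le_antisymm h zero_le

lemma AF.norm_deriv_le {n : ℕ} {γ : ℝ → Euc n} {K : ℝ≥0} (hγ : LipschitzWith K γ) (t : ℝ) :
    ‖deriv γ t‖ ≤ K := by
  apply norm_deriv_le_of_lip' K.coe_nonneg
  filter_upwards with s
  have := hγ.dist_le_mul s t
  rwa [dist_eq_norm, dist_eq_norm, Real.norm_eq_abs] at this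

lemma AF.upper {n : ℕ} {γ : ℝ → Euc n} {K : ℝ≥0} (hγ : LipschitzWith K γ)
    {B : Set ℝ} (hB : MeasurableSet B) (hB1 : B ⊆ Icc (0:ℝ) 1) :
    μH[1] (γ '' B) ≤ ∫⁻ t in B, ENNReal.ofReal ‖deriv γ t‖ := by
  set g : ℝ → ℝ≥0∞ := fun t => ENNReal.ofReal ‖deriv γ t‖ with hg
  have hgm : Measurable g := (measurable_deriv γ).norm.ennreal_ofReal
  -- reduce to an `ε`-perturbed statement
  suffices h : ∀ ε : ℝ, 0 < ε →
      μH[1] (γ '' B) ≤ (∫⁻ t in B, g t) + ENNReal.ofReal (2 * ε) by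
    apply ENNReal.le_of_forall_pos_le_add
    intro δ hδ _
    have := h (δ / 2) (by positivity)
    calc μH[1] (γ '' B) ≤ (∫⁻ t in B, g t) + ENNReal.ofReal (2 * (δ / 2)) := this
      _ = (∫⁻ t in B, g t) + δ := by
          congr 1
          rw [mul_div_cancel₀ _ two_ne_zero, ENNReal.ofReal_coe_nnreal]
  intro ε hε
  set D := {t | DifferentiableAt ℝ γ t} with hD
  have hDm : MeasurableSet D := measurableSet_of_differentiableAt ℝ γ
  have hDae : volume Dᶜ = 0 := by
    have : ∀ᵐ x ∂(volume : Measure ℝ), DifferentiableAt ℝ γ x := hγ.ae_differentiableAt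
    simpa [hD, ae_iff, Set.compl_setOf] using this
  have hnull : μH[1] (γ '' (B \ D)) = 0 :=
    AF.image_null hγ (measure_mono_null (diff_subset_compl _ _) hDae)
  -- the good sets
  set C : ℕ → Set ℝ := fun k =>
    {t | ∀ s, |s - t| < 1 / (k + 1) → ‖γ s - γ t‖ ≤ (‖deriv γ t‖ + ε) * |s - t|} with hC
  have hCm : ∀ k, MeasurableSet (C k) := by
    intro k
    have hCeq : C k = ⋂ (q : ℚ),
        {t | |(q : ℝ) - t| < 1 / (k + 1) → ‖γ q - γ t‖ ≤ (‖deriv γ t‖ + ε) * |(q:ℝ) - t|} := by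
      apply Subset.antisymm
      · exact fun t ht => mem_iInter.2 fun q hq => ht q hq
      · intro t ht s hs
        have hZ : IsClosed {u : ℝ | ‖γ u - γ t‖ ≤ (‖deriv γ t‖ + ε) * |u - t|} :=
          isClosed_le ((hγ.continuous.sub continuous_const).norm)
            (continuous_const.mul ((continuous_id.sub continuous_const).abs))
        have hball : Metric.ball t (1 / (k + 1)) ⊆
            {u : ℝ | ‖γ u - γ t‖ ≤ (‖deriv γ t‖ + ε) * |u - t|} := by
          have hdense : Dense (range ((↑) : ℚ → ℝ)) := Rat.denseRange_cast
          have hsub1 : Metric.ball t (1 / (k+1)) ⊆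
              closure (Metric.ball t (1 / (k+1)) ∩ range ((↑) : ℚ → ℝ)) :=
            hdense.open_subset_closure_inter Metric.isOpen_ball
          refine hsub1.trans (hZ.closure_subset_iff.2 ?_)
          rintro u ⟨hu1, q, rfl⟩
          exact (mem_iInter.1 ht q) (by simpa [Real.dist_eq] using hu1)
        exact hball (by simpa [Real.dist_eq] using hs)
    rw [hCeq]
    refine MeasurableSet.iInter fun q => ?_
    have h1 : MeasurableSet {t : ℝ | |(q:ℝ) - t| < 1 / (k+1)} :=
      measurableSet_lt (by fun_prop) measurable_const
    have h2 : MeasurableSet {t : ℝ | ‖γ (q:ℝ) - γ t‖ ≤ (‖deriv γ t‖ + ε) * |(q:ℝ) - t|} :=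
      measurableSet_le ((continuous_const.sub hγ.continuous).norm.measurable)
        (((measurable_deriv γ).norm.add_const ε).mul
          ((continuous_const.sub continuous_id).abs.measurable))
    have heq : {t : ℝ | |(q : ℝ) - t| < 1 / (k + 1) → ‖γ q - γ t‖ ≤ (‖deriv γ t‖ + ε) * |(q:ℝ) - t|}
        = {t : ℝ | |(q:ℝ) - t| < 1 / (k+1)}ᶜ ∪
          {t : ℝ | ‖γ (q:ℝ) - γ t‖ ≤ (‖deriv γ t‖ + ε) * |(q:ℝ) - t|} := by
      ext t; simp [imp_iff_not_or]
    rw [heq]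
    exact h1.compl.union h2
  have hCmono : Monotone C := by
    intro k k' hkk t ht s hs
    refine ht s (lt_of_lt_of_le hs ?_)
    apply one_div_le_one_div_of_le (by positivity)
    exact_mod_cast Nat.succ_le_succ hkk
  have hDC : D ⊆ ⋃ k, C k := by
    intro t ht
    have hd : HasDerivAt γ (deriv γ t) t := (ht : DifferentiableAt ℝ γ t).hasDerivAt
    rw [hasDerivAt_iff_isLittleO] at hd
    have hev := hd.def hε
    rw [Metric.eventually_nhds_iff] at hev
    obtain ⟨δ, hδ, hδ'⟩ := hev
    obtain ⟨k, hk⟩ := exists_nat_one_div_lt hδ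
    refine mem_iUnion.2 ⟨k, fun s hs => ?_⟩
    have hsδ : dist s t < δ := by
      rw [Real.dist_eq]; exact hs.trans hk
    have h1 := hδ' hsδ
    calc ‖γ s - γ t‖ = ‖(γ s - γ t - (s - t) • deriv γ t) + (s - t) • deriv γ t‖ := by
          congr 1; abel
      _ ≤ ‖γ s - γ t - (s - t) • deriv γ t‖ + ‖(s - t) • deriv γ t‖ := norm_add_le _ _
      _ ≤ ε * ‖s - t‖ + |s - t| * ‖deriv γ t‖ := by
          have h2 : ‖(s - t) • deriv γ t‖ = |s - t| * ‖deriv γ t‖ := by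
            rw [norm_smul, Real.norm_eq_abs]
          rw [h2]; gcongr
      _ = (‖deriv γ t‖ + ε) * |s - t| := by rw [Real.norm_eq_abs]; ring
  -- disjointify
  set T : ℕ → Set ℝ := disjointed C with hT
  have hTm : ∀ k, MeasurableSet (T k) := MeasurableSet.disjointed hCm
  have hTsub : ∀ k, T k ⊆ C k := disjointed_subset C
  have hTdisj : Pairwise (Function.onFun Disjoint T) := disjoint_disjointed C
  have hTU : ⋃ k, T k = ⋃ k, C k := iUnion_disjointed
  -- the pieces
  set E : ℕ × ℕ × ℤ → Set ℝ := fun p =>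
    B ∩ D ∩ T p.1 ∩ ((fun t => ‖deriv γ t‖) ⁻¹' Ico ((p.2.1 : ℝ) * ε) ((p.2.1 + 1) * ε)) ∩
      Ico ((p.2.2 : ℝ) / (p.1 + 1)) ((p.2.2 + 1) / (p.1 + 1)) with hE
  have hEm : ∀ p, MeasurableSet (E p) := by
    intro p
    exact ((((hB.inter hDm).inter (hTm p.1)).inter
      ((measurable_deriv γ).norm measurableSet_Ico)).inter measurableSet_Ico)
  have hEcover : B ∩ D = ⋃ p, E p := by
    apply Subset.antisymm
    · intro t ht
      have htT : t ∈ ⋃ k, T k := by rw [hTU]; exact hDC ht.2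
      obtain ⟨k, hk⟩ := mem_iUnion.1 htT
      set j : ℕ := ⌊‖deriv γ t‖ / ε⌋₊ with hj
      set i : ℤ := ⌊t * (k + 1)⌋ with hi
      refine mem_iUnion.2 ⟨⟨k, j, i⟩, ⟨⟨⟨ht, hk⟩, ?_⟩, ?_⟩⟩
      · simp only [mem_preimage, mem_Ico]
        constructor
        · have h := Nat.floor_le (show (0:ℝ) ≤ ‖deriv γ t‖ / ε by positivity)
          rw [← hj] at h
          calc (j:ℝ) * ε ≤ ‖deriv γ t‖ / ε * ε := by gcongr
            _ = ‖deriv γ t‖ := by field_simp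
        · have h := Nat.lt_floor_add_one (‖deriv γ t‖ / ε)
          rw [← hj] at h
          calc ‖deriv γ t‖ = ‖deriv γ t‖ / ε * ε := by field_simp
            _ < ((j : ℝ) + 1) * ε := by gcongr
      · have hk1 : (0:ℝ) < (k:ℝ) + 1 := by positivity
        simp only [mem_Ico]
        constructor
        · rw [div_le_iff₀ hk1]
          calc ((i:ℝ)) ≤ t * (k+1) := Int.floor_le _
            _ = t * ((k:ℝ)+1) := rfl
        · rw [lt_div_iff₀ hk1]
          calc t * ((k:ℝ)+1) < (i:ℝ) + 1 := Int.lt_floor_add_one _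
            _ = ((i:ℝ)+1) := rfl
    · refine iUnion_subset fun p => ?_
      intro t ht
      exact ⟨ht.1.1.1.1, ht.1.1.1.2⟩
  have hEdisj : Pairwise (Function.onFun Disjoint E) := by
    intro p q hne
    obtain ⟨k, j, i⟩ := p
    obtain ⟨k', j', i'⟩ := q
    rcases eq_or_ne k k' with rfl | hk
    · rcases eq_or_ne j j' with rfl | hj
      · have hi : i ≠ i' := by
          intro h; exact hne (by rw [h])
        have hIco : Disjoint (Ico ((i:ℝ) / (k+1)) ((i+1) / (k+1)))
            (Ico ((i':ℝ) / (k+1)) ((i'+1) / (k+1))) := by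
          rw [Set.Ico_disjoint_Ico]
          have hk1 : (0:ℝ) < (k:ℝ) + 1 := by positivity
          rcases hi.lt_or_gt with h | h
          · have : ((i:ℝ)+1) / (k+1) ≤ (i':ℝ) / (k+1) := by
              gcongr; exact_mod_cast h
            exact (min_le_left _ _).trans (this.trans (le_max_right _ _))
          · have : ((i':ℝ)+1) / (k+1) ≤ (i:ℝ) / (k+1) := by
              gcongr; exact_mod_cast h
            exact (min_le_right _ _).trans (this.trans (le_max_left _ _))
        exact hIco.mono inter_subset_right inter_subset_right
      · have hIco : Disjoint (Ico ((j:ℝ) * ε) ((j+1) * ε)) (Ico ((j':ℝ) * ε) ((j'+1) * ε)) := by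
          rw [Set.Ico_disjoint_Ico]
          rcases hj.lt_or_gt with h | h
          · have : ((j:ℝ)+1) * ε ≤ (j':ℝ) * ε := by
              have : (j:ℝ) + 1 ≤ (j':ℝ) := by exact_mod_cast h
              nlinarith
            exact (min_le_left _ _).trans (this.trans (le_max_right _ _))
          · have : ((j':ℝ)+1) * ε ≤ (j:ℝ) * ε := by
              have : (j':ℝ) + 1 ≤ (j:ℝ) := by exact_mod_cast h
              nlinarith
            exact (min_le_right _ _).trans (this.trans (le_max_left _ _))
        exact ((hIco.preimage _).mono inter_subset_right inter_subset_right).mono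
          inter_subset_left inter_subset_left
    · refine (hTdisj hk).mono ?_ ?_
      · exact fun t ht => ht.1.1.2
      · exact fun t ht => ht.1.1.2
  -- per-piece estimate
  have hEest : ∀ p : ℕ × ℕ × ℤ, μH[1] (γ '' E p) ≤
      (∫⁻ t in E p, g t) + ENNReal.ofReal (2 * ε) * volume (E p) := by
    rintro ⟨k, j, i⟩
    have hc0 : (0:ℝ) ≤ ((j:ℝ) + 2) * ε := by positivity
    have hlip : LipschitzOnWith (((j:ℝ) + 2) * ε).toNNReal γ (E (k, j, i)) := by
      rw [lipschitzOnWith_iff_dist_le_mul]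
      intro s hs t ht
      rw [Real.coe_toNNReal _ hc0, dist_eq_norm, Real.dist_eq]
      have hst : |s - t| < 1 / ((k:ℝ) + 1) := by
        have h1 := hs.2
        have h2 := ht.2
        simp only [mem_Ico] at h1 h2
        rw [abs_sub_lt_iff]
        have : ((i:ℝ)+1) / ((k:ℝ)+1) - (i:ℝ) / ((k:ℝ)+1) = 1 / ((k:ℝ)+1) := by
          field_simp; ring
        constructor <;> linarith
      have hC := (hTsub k ht.1.1.2) s hst
      have hband := ht.1.2
      simp only [mem_preimage, mem_Ico] at hband
      calc ‖γ s - γ t‖ ≤ (‖deriv γ t‖ + ε) * |s - t| := hC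
        _ ≤ (((j:ℝ) + 2) * ε) * |s - t| := by
            have : ‖deriv γ t‖ + ε ≤ ((j:ℝ)+2) * ε := by nlinarith [hband.2]
            gcongr
    have h1 := hlip.hausdorffMeasure_image_le zero_le_one
    rw [ENNReal.rpow_one] at h1
    have h2 : μH[1] (E (k, j, i)) = volume (E (k, j, i)) := by
      rw [MeasureTheory.hausdorffMeasure_real]
    rw [h2] at h1
    have hcoe : ((((j:ℝ) + 2) * ε).toNNReal : ℝ≥0∞) = ENNReal.ofReal (((j:ℝ)+2) * ε) := rfl
    rw [hcoe] at h1
    refine h1.trans ?_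
    have hpt : ∀ t ∈ E (k, j, i),
        ENNReal.ofReal (((j:ℝ)+2) * ε) ≤ g t + ENNReal.ofReal (2 * ε) := by
      intro t ht
      have hband := ht.1.2
      simp only [mem_preimage, mem_Ico] at hband
      have : ((j:ℝ)+2) * ε = (j:ℝ) * ε + 2 * ε := by ring
      rw [this, ENNReal.ofReal_add (by positivity) (by positivity)]
      gcongr
      exact ENNReal.ofReal_le_ofReal hband.1
    calc ENNReal.ofReal (((j:ℝ)+2) * ε) * volume (E (k,j,i))
        = ∫⁻ _ in E (k,j,i), ENNReal.ofReal (((j:ℝ)+2) * ε) := by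
          rw [setLIntegral_const]
      _ ≤ ∫⁻ t in E (k,j,i), (g t + ENNReal.ofReal (2 * ε)) :=
          setLIntegral_mono (hgm.add measurable_const) hpt
      _ = (∫⁻ t in E (k,j,i), g t) + ENNReal.ofReal (2 * ε) * volume (E (k,j,i)) := by
          rw [lintegral_add_right _ measurable_const, setLIntegral_const]
  -- sum up
  have himg : γ '' B ⊆ γ '' (B ∩ D) ∪ γ '' (B \ D) := by
    rw [← image_union, inter_union_diff]
  have hsum : μH[1] (γ '' (B ∩ D)) ≤ ∑' p, μH[1] (γ '' E p) := by
    rw [hEcover, image_iUnion]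
    exact measure_iUnion_le _
  have hBvol : volume (B ∩ D) ≤ 1 := by
    calc volume (B ∩ D) ≤ volume (Icc (0:ℝ) 1) :=
          measure_mono (inter_subset_left.trans hB1)
      _ = 1 := by simp
  calc μH[1] (γ '' B) ≤ μH[1] (γ '' (B ∩ D) ∪ γ '' (B \ D)) := measure_mono himg
    _ ≤ μH[1] (γ '' (B ∩ D)) + μH[1] (γ '' (B \ D)) := measure_union_le _ _
    _ = μH[1] (γ '' (B ∩ D)) := by rw [hnull, add_zero]
    _ ≤ ∑' p, μH[1] (γ '' E p) := hsum
    _ ≤ ∑' p, ((∫⁻ t in E p, g t) + ENNReal.ofReal (2 * ε) * volume (E p)) :=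
        ENNReal.tsum_le_tsum hEest
    _ = (∑' p, ∫⁻ t in E p, g t) + ENNReal.ofReal (2 * ε) * ∑' p, volume (E p) := by
        rw [ENNReal.tsum_add, ENNReal.tsum_mul_left]
    _ = (∫⁻ t in ⋃ p, E p, g t) + ENNReal.ofReal (2 * ε) * volume (⋃ p, E p) := by
        rw [lintegral_iUnion hEm hEdisj, measure_iUnion hEdisj hEm]
    _ ≤ (∫⁻ t in B, g t) + ENNReal.ofReal (2 * ε) * 1 := by
        gcongr
        · rw [← hEcover]; exact inter_subset_left
        · rw [← hEcover]; exact hBvol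
    _ = (∫⁻ t in B, g t) + ENNReal.ofReal (2 * ε) := by rw [mul_one]
/-- Lower bound: `H¹` of the image of an interval is at least the distance of endpoints. -/
lemma AF.lower_seg {n : ℕ} {γ : ℝ → Euc n} (hc : Continuous γ) {a b : ℝ} (hab : a ≤ b) :
    ENNReal.ofReal ‖γ b - γ a‖ ≤ μH[1] (γ '' Icc a b) := by
  set v : Euc n := γ b - γ a with hv
  rcases eq_or_ne v 0 with h0 | h0
  · simp [h0]
  · set e : Euc n := ‖v‖⁻¹ • v with he
    have hev : ‖e‖ = 1 := by
      rw [he, norm_smul, norm_inv, norm_norm, inv_mul_cancel₀ (norm_ne_zero_iff.2 h0)]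
    set π : Euc n → ℝ := fun x => inner ℝ x e with hπ
    have hlip : LipschitzWith 1 π := by
      apply LipschitzWith.of_dist_le_mul
      intro x y
      rw [dist_eq_norm, dist_eq_norm, NNReal.coe_one, one_mul]
      calc ‖π x - π y‖ = ‖(inner ℝ (x - y) e : ℝ)‖ := by rw [hπ]; simp [inner_sub_left]
        _ ≤ ‖x - y‖ * ‖e‖ := norm_inner_le_norm _ _
        _ = ‖x - y‖ := by rw [hev, mul_one]
    have key : μH[1] (π '' (γ '' Icc a b)) ≤ μH[1] (γ '' Icc a b) := by
      have := hlip.hausdorffMeasure_image_le (zero_le_one) (γ '' Icc a b)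
      simpa using this
    have hsub : uIcc (π (γ a)) (π (γ b)) ⊆ π '' (γ '' Icc a b) := by
      rw [← image_comp]
      have := intermediate_value_uIcc (a := a) (b := b) ((hlip.continuous.comp hc).continuousOn (s := uIcc a b))
      rwa [uIcc_of_le hab] at this
    have hinner : inner ℝ v e = ‖v‖ := by
      rw [he, real_inner_smul_right, real_inner_self_eq_norm_sq]
      rw [sq]
      field_simp
    have hval : π (γ b) - π (γ a) = ‖v‖ := by
      rw [hπ]; simp only [← inner_sub_left]; rw [← hv, hinner]
    calc ENNReal.ofReal ‖v‖ = volume (uIcc (π (γ a)) (π (γ b))) := by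
          rw [Real.volume_interval, ← hval]
          rw [abs_of_nonneg (by rw [hval]; exact norm_nonneg _)]
      _ = μH[1] (uIcc (π (γ a)) (π (γ b))) := by rw [MeasureTheory.hausdorffMeasure_real]
      _ ≤ μH[1] (π '' (γ '' Icc a b)) := measure_mono hsub
      _ ≤ _ := key

lemma AF.tendsto_sym {n : ℕ} {γ : ℝ → Euc n} {x : ℝ} (hd : DifferentiableAt ℝ γ x) :
    Tendsto (fun r : ℝ => ‖γ (x + r) - γ (x - r)‖ / (2 * r)) (𝓝[>] 0) (𝓝 ‖deriv γ x‖) := by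
  set v := deriv γ x with hv
  have hs : Tendsto (slope γ x) (𝓝[≠] x) (𝓝 v) := hasDerivAt_iff_tendsto_slope.1 hd.hasDerivAt
  have h1 : Tendsto (fun r : ℝ => x + r) (𝓝[>] 0) (𝓝[≠] x) := by
    rw [tendsto_nhdsWithin_iff]
    constructor
    · have : Tendsto (fun r : ℝ => x + r) (𝓝 0) (𝓝 x) := by
        simpa using (continuous_add_left x).tendsto (0:ℝ)
      exact this.mono_left nhdsWithin_le_nhds
    · filter_upwards [self_mem_nhdsWithin] with r (hr : 0 < r)
      simp only [mem_compl_iff, mem_singleton_iff]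
      intro h; nlinarith [hr]
  have h2 : Tendsto (fun r : ℝ => x - r) (𝓝[>] 0) (𝓝[≠] x) := by
    rw [tendsto_nhdsWithin_iff]
    constructor
    · have : Tendsto (fun r : ℝ => x - r) (𝓝 0) (𝓝 x) := by
        simpa using (continuous_sub_left x).tendsto (0:ℝ)
      exact this.mono_left nhdsWithin_le_nhds
    · filter_upwards [self_mem_nhdsWithin] with r (hr : 0 < r)
      simp only [mem_compl_iff, mem_singleton_iff]
      intro h; nlinarith [hr]
  have ha := hs.comp h1
  have hb := hs.comp h2
  have hhalf : Tendsto (fun r : ℝ =>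
      (1/2 : ℝ) • slope γ x (x + r) + (1/2 : ℝ) • slope γ x (x - r)) (𝓝[>] 0)
      (𝓝 ((1/2 : ℝ) • v + (1/2 : ℝ) • v)) :=
    (ha.const_smul _).add (hb.const_smul _)
  have hvv : (1/2 : ℝ) • v + (1/2 : ℝ) • v = v := by
    rw [← add_smul]; norm_num
  rw [hvv] at hhalf
  have hcongr : ∀ᶠ r in 𝓝[>] (0:ℝ),
      (1/2 : ℝ) • slope γ x (x + r) + (1/2 : ℝ) • slope γ x (x - r)
        = (2 * r)⁻¹ • (γ (x + r) - γ (x - r)) := by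
    filter_upwards [self_mem_nhdsWithin] with r (hr : 0 < r)
    rw [slope_def_module, slope_def_module]
    have e1 : x + r - x = r := by ring
    have e2 : x - r - x = -r := by ring
    rw [e1, e2]
    match_scalars <;> field_simp <;> ring
  have hmain : Tendsto (fun r : ℝ => (2 * r)⁻¹ • (γ (x + r) - γ (x - r))) (𝓝[>] 0) (𝓝 v) :=
    hhalf.congr' hcongr
  have hnorm := hmain.norm
  refine hnorm.congr' ?_
  filter_upwards [self_mem_nhdsWithin] with r (hr : 0 < r)
  rw [norm_smul, norm_inv, Real.norm_eq_abs, abs_of_pos (by positivity), inv_mul_eq_div]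

lemma AF.key {n : ℕ} {γ : ℝ → Euc n} {K : ℝ≥0} (hγ : LipschitzWith K γ)
    (hinj : InjOn γ (Icc (0:ℝ) 1)) :
    ∃ ν : Measure ℝ, (∀ B, MeasurableSet B → ν B = μH[1] (γ '' (B ∩ Icc (0:ℝ) 1))) ∧
      (∀ B, MeasurableSet B → B ⊆ Icc (0:ℝ) 1 →
        ν B = ∫⁻ t in B, ENNReal.ofReal ‖deriv γ t‖) := by
  set S := Icc (0:ℝ) 1 with hSdef
  have hS : MeasurableSet S := measurableSet_Icc
  haveI ps : PolishSpace S := IsClosed.polishSpace isClosed_Icc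
  set e : S → Euc n := fun t => γ t with he
  have he_meas : Measurable e := hγ.continuous.measurable.comp measurable_subtype_coe
  have he_inj : Function.Injective e := fun a b h => Subtype.ext (hinj a.2 b.2 h)
  have hemb : MeasurableEmbedding e := he_meas.measurableEmbedding he_inj
  set ν : Measure ℝ := (Measure.comap e μH[1]).map (Subtype.val) with hν
  set g : ℝ → ℝ≥0∞ := fun t => ENNReal.ofReal ‖deriv γ t‖ with hg
  have hgm : Measurable g := (measurable_deriv γ).norm.ennreal_ofReal
  have himg : ∀ B : Set ℝ, e '' (Subtype.val ⁻¹' B) = γ '' (B ∩ S) := by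
    intro B
    have : e = γ ∘ Subtype.val := rfl
    rw [this, image_comp, Subtype.image_preimage_coe, inter_comm]
  have hνap : ∀ B, MeasurableSet B → ν B = μH[1] (γ '' (B ∩ S)) := by
    intro B hB
    rw [hν, Measure.map_apply measurable_subtype_coe hB, hemb.comap_apply, himg]
  refine ⟨ν, hνap, ?_⟩
  have hνfin : IsFiniteMeasure ν := by
    constructor
    rw [hνap univ MeasurableSet.univ, univ_inter]
    have h := hγ.hausdorffMeasure_image_le zero_le_one S
    rw [ENNReal.rpow_one, MeasureTheory.hausdorffMeasure_real] at h
    calc μH[1] (γ '' S) ≤ K * volume S := h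
      _ < ⊤ := by
          rw [hSdef, Real.volume_Icc]
          exact ENNReal.mul_lt_top ENNReal.coe_lt_top ENNReal.ofReal_lt_top
  haveI := hνfin
  have hac : ν ≪ volume := by
    refine Measure.AbsolutelyContinuous.mk fun s hs hs0 => ?_
    rw [hνap s hs]
    exact AF.image_null hγ (measure_mono_null inter_subset_left hs0)
  set ρ : ℝ → ℝ≥0∞ := ν.rnDeriv volume with hρ
  have hρm : Measurable ρ := Measure.measurable_rnDeriv ν volume
  have hwd : volume.withDensity ρ = ν := Measure.withDensity_rnDeriv_eq ν volume hac
  have hνB : ∀ B, MeasurableSet B → ν B = ∫⁻ t in B, ρ t := by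
    intro B hB
    rw [← hwd, withDensity_apply _ hB]
  -- upper a.e. bound
  have h_up : ∀ᵐ x ∂(volume.restrict S), ρ x ≤ g x := by
    refine ae_le_of_forall_setLIntegral_le_of_sigmaFinite (μ := volume.restrict S) hρm
      (fun s hs hlt => ?_)
    have : (volume.restrict S).restrict s = volume.restrict (s ∩ S) := Measure.restrict_restrict hs
    calc (∫⁻ x in s, ρ x ∂volume.restrict S) = ∫⁻ x in s ∩ S, ρ x := by rw [this]
      _ = ν (s ∩ S) := (hνB _ (hs.inter hS)).symm
      _ = μH[1] (γ '' (s ∩ S ∩ S)) := hνap _ ((hs.inter hS))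
      _ = μH[1] (γ '' (s ∩ S)) := by rw [inter_assoc, inter_self]
      _ ≤ ∫⁻ t in s ∩ S, g t := AF.upper hγ (hs.inter hS) inter_subset_right
      _ = ∫⁻ x in s, g x ∂volume.restrict S := by exact this ▸ rfl
  have h_up' : ∀ᵐ x ∂volume, x ∈ S → ρ x ≤ g x := (ae_restrict_iff' hS).1 h_up
  -- lower a.e. bound
  have h_low : ∀ᵐ x ∂(volume : Measure ℝ), x ∈ Ioo (0:ℝ) 1 → g x ≤ ρ x := by
    filter_upwards [Besicovitch.ae_tendsto_rnDeriv ν volume, hγ.ae_differentiableAt]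
      with x hx hdiff hxI
    have hG : Tendsto (fun r : ℝ => ENNReal.ofReal (‖γ (x + r) - γ (x - r)‖ / (2 * r)))
        (𝓝[>] 0) (𝓝 (g x)) :=
      (ENNReal.continuous_ofReal.tendsto _).comp (AF.tendsto_sym hdiff)
    have hm : 0 < min x (1 - x) := by
      simp only [lt_min_iff]
      constructor <;> [exact hxI.1; linarith [hxI.2]]
    have hle : ∀ᶠ r in 𝓝[>] (0:ℝ),
        ENNReal.ofReal (‖γ (x + r) - γ (x - r)‖ / (2 * r)) ≤
          ν (Metric.closedBall x r) / volume (Metric.closedBall x r) := by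
      filter_upwards [Ioo_mem_nhdsGT_of_mem ⟨le_refl (0:ℝ), hm⟩] with r hr
      obtain ⟨hr0, hrm⟩ := hr
      have hball : Metric.closedBall x r = Icc (x - r) (x + r) := Real.closedBall_eq_Icc
      have hsub : Icc (x - r) (x + r) ⊆ S := by
        apply Icc_subset_Icc
        · have : r < x := lt_of_lt_of_le hrm (min_le_left _ _)
          linarith
        · have : r < 1 - x := lt_of_lt_of_le hrm (min_le_right _ _)
          linarith
      have hνb : ENNReal.ofReal ‖γ (x + r) - γ (x - r)‖ ≤ ν (Metric.closedBall x r) := by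
        rw [hνap _ measurableSet_closedBall, hball, inter_eq_self_of_subset_left hsub]
        exact AF.lower_seg hγ.continuous (by linarith)
      have hvol : volume (Metric.closedBall x r) = ENNReal.ofReal (2 * r) := by
        rw [hball, Real.volume_Icc]; congr 1; ring
      rw [hvol, ENNReal.ofReal_div_of_pos (by positivity)]
      exact ENNReal.div_le_div_right hνb _
    exact le_of_tendsto_of_tendsto hG hx hle
  -- combine
  intro B hB hB1
  have h01 : ∀ᵐ x ∂(volume : Measure ℝ), x ∉ ({0, 1} : Set ℝ) := by
    have : volume ({0, 1} : Set ℝ) = 0 :=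
      Set.Countable.measure_zero (Set.to_countable _) _
    refine ae_iff.2 (measure_mono_null (fun a ha => ?_) this)
    rw [mem_setOf_eq, not_not] at ha
    exact ha
  have hae : ∀ᵐ x ∂(volume : Measure ℝ), x ∈ B → ρ x = g x := by
    filter_upwards [h_up', h_low, h01] with x h1 h2 h3 hxB
    have hxS : x ∈ S := hB1 hxB
    have hxI : x ∈ Ioo (0:ℝ) 1 := by
      rcases hxS with ⟨ha, hb⟩
      simp only [mem_insert_iff, mem_singleton_iff, not_or] at h3
      exact ⟨lt_of_le_of_ne ha (Ne.symm h3.1), lt_of_le_of_ne hb h3.2⟩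
    exact le_antisymm (h1 hxS) (h2 hxI)
  rw [hνB B hB]
  exact setLIntegral_congr_fun_ae hB (by filter_upwards [hae] with x h hx using h hx)

/-- Area formula for injective Lipschitz curves: for Borel measurable nonnegative `f`,
`∫_{γ(A)} f dH^1 = ∫_A f(γ(t)) ‖γ'(t)‖ dt`. -/
theorem area_formula_injective {n : ℕ} (γ : ℝ → Euc n) (K : ℝ≥0)
    (hγ : LipschitzWith K γ) (hinj : InjOn γ (Icc (0:ℝ) 1))
    (f : Euc n → ℝ≥0∞) (hf : Measurable f)
    (A : Set ℝ) (hA : MeasurableSet A) (hA1 : A ⊆ Icc (0:ℝ) 1) :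
    ∫⁻ x in γ '' A, f x ∂μH[1] = ∫⁻ t in A, f (γ t) * ENNReal.ofReal ‖deriv γ t‖ := by
  obtain ⟨ν, hνap, hkey⟩ := AF.key hγ hinj
  set g : ℝ → ℝ≥0∞ := fun t => ENNReal.ofReal ‖deriv γ t‖ with hg
  have hgm : Measurable g := (measurable_deriv γ).norm.ennreal_ofReal
  have hγm : Measurable γ := hγ.continuous.measurable
  have hrestr : (μH[1] : Measure (Euc n)).restrict (γ '' A) = Measure.map γ (ν.restrict A) := by
    ext s hs
    rw [Measure.restrict_apply hs, Measure.map_apply hγm hs, Measure.restrict_apply (hγm hs),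
      hνap _ ((hγm hs).inter hA),
      inter_eq_self_of_subset_left (inter_subset_right.trans hA1),
      image_preimage_inter]
  have hwd : ν.restrict A = (volume.restrict A).withDensity g := by
    ext s hs
    rw [Measure.restrict_apply hs, hkey _ (hs.inter hA) (inter_subset_right.trans hA1),
      withDensity_apply _ hs, Measure.restrict_restrict hs]
  calc ∫⁻ x in γ '' A, f x ∂μH[1]
      = ∫⁻ x, f x ∂(Measure.map γ (ν.restrict A)) := by rw [← hrestr]
    _ = ∫⁻ t, f (γ t) ∂(ν.restrict A) := lintegral_map hf hγm
    _ = ∫⁻ t, f (γ t) ∂((volume.restrict A).withDensity g) := by rw [hwd]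
    _ = ∫⁻ t, (g * fun t => f (γ t)) t ∂(volume.restrict A) :=
        lintegral_withDensity_eq_lintegral_mul _ hgm (hf.comp hγm)
    _ = ∫⁻ t in A, f (γ t) * g t := lintegral_congr fun t => mul_comm _ _
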